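/- Recovering a random variable from its randomized rank: let X be a real random variable with complementary CDF F̄ and quantile-type inverse G(δ) = inf{b : F̄(b) ≤ δ}, and let θ ~ Uniform(0,1) be independent of X, with R = F̄(X) + θ(F̄(X⁻) − F̄(X)). Then P(G(R) = X) = 1; moreover on the event {F̄(X⁻) > F̄(X)}, θ = (R − F̄(G(R)))/(F̄(G(R)⁻) − F̄(G(R))) almost surely, so the pair (X, θ) is an almost-sure measurable function of R. -/

import Mathlib

open MeasureTheory ProbabilityTheory

/-- The set of points `x` having some left-neighborhood `(b, x]` of `ν`-measure
zero is itself `ν`-null (for each fixed left endpoint `q`). -/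
lemma null_flat (ν : Measure ℝ) (q : ℝ) :
    ν {x | q < x ∧ ν (Set.Ioc q x) = 0} = 0 := by
  set S := {x | q < x ∧ ν (Set.Ioc q x) = 0} with hSdef
  rcases Set.eq_empty_or_nonempty S with h | hne
  · simp [h]
  by_cases hbdd : BddAbove S
  · by_cases hsS : ν (Set.Ioc q (sSup S)) = 0
    · refine measure_mono_null ?_ hsS
      intro x hx
      exact ⟨hx.1, le_csSup hbdd hx⟩
    · -- every x ∈ S is < sSup S; cover S by Ioc q (sSup S - (n+1)⁻¹), each null
      have hnull : ∀ n : ℕ, ν (Set.Ioc q (sSup S - ((n:ℝ)+1)⁻¹)) = 0 := by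
        intro n
        by_cases hq : sSup S - ((n:ℝ)+1)⁻¹ ≤ q
        · rw [Set.Ioc_eq_empty (fun h => absurd (lt_of_le_of_lt hq h) (lt_irrefl _))]
          exact measure_empty
        · push_neg at hq
          have hlt : sSup S - ((n:ℝ)+1)⁻¹ < sSup S := by
            have : (0:ℝ) < ((n:ℝ)+1)⁻¹ := by positivity
            linarith
          obtain ⟨x, hxS, hx⟩ := exists_lt_of_lt_csSup hne hlt
          exact measure_mono_null (Set.Ioc_subset_Ioc_right hx.le) hxS.2
      have hcov : S ⊆ ⋃ n : ℕ, Set.Ioc q (sSup S - ((n:ℝ)+1)⁻¹) := by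
        intro x hx
        have hxs : x < sSup S := by
          rcases lt_or_eq_of_le (le_csSup hbdd hx) with h | h
          · exact h
          · exact absurd (h ▸ hx.2) hsS
        obtain ⟨n, hn⟩ := exists_nat_one_div_lt (sub_pos.2 hxs)
        rw [one_div] at hn
        exact Set.mem_iUnion.2 ⟨n, hx.1, by linarith⟩
      refine le_antisymm (le_trans (measure_mono hcov) ?_) zero_le
      calc ν (⋃ n : ℕ, Set.Ioc q (sSup S - ((n:ℝ)+1)⁻¹))
          ≤ ∑' n : ℕ, ν (Set.Ioc q (sSup S - ((n:ℝ)+1)⁻¹)) := measure_iUnion_le _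
        _ = 0 := by simp [hnull]
  · -- S unbounded above: ν (Ioi q) = 0
    have hioi : ν (Set.Ioi q) = 0 := by
      have hcov : Set.Ioi q ⊆ ⋃ n : ℕ, Set.Ioc q (q + (n+1)) := by
        intro y hy
        obtain ⟨n, hn⟩ := exists_nat_ge (y - q)
        exact Set.mem_iUnion.2 ⟨n, hy, by linarith⟩
      have hnull : ∀ n : ℕ, ν (Set.Ioc q (q + (n+1))) = 0 := by
        intro n
        obtain ⟨x, hxS, hx⟩ := not_bddAbove_iff.1 hbdd (q + (n+1))
        exact measure_mono_null (Set.Ioc_subset_Ioc_right hx.le) hxS.2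
      refine le_antisymm (le_trans (measure_mono hcov) ?_) zero_le
      calc ν (⋃ n : ℕ, Set.Ioc q (q + (n+1))) ≤ ∑' n : ℕ, ν (Set.Ioc q (q + (n+1))) :=
            measure_iUnion_le _
        _ = 0 := by simp [hnull]
    exact measure_mono_null (fun x hx => hx.1) hioi

/-- The law of `X` gives no mass to points `x` having a null left-neighborhood
`(b, x]`. -/
lemma ae_no_flat {Ω : Type*} {m0 : MeasurableSpace Ω} {μ : Measure Ω}
    (X : Ω → ℝ) (hX : Measurable X) :
    ∀ᵐ ω ∂μ, ∀ b < X ω, Measure.map X μ (Set.Ioc b (X ω)) ≠ 0 := by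
  set ν := Measure.map X μ with hν
  set Bad := {x : ℝ | ∃ b < x, ν (Set.Ioc b x) = 0} with hBad
  have hBadCov : Bad ⊆ ⋃ q : ℚ, {x : ℝ | (q:ℝ) < x ∧ ν (Set.Ioc (q:ℝ) x) = 0} := by
    rintro x ⟨b, hbx, hb0⟩
    obtain ⟨q, hq1, hq2⟩ := exists_rat_btwn hbx
    exact Set.mem_iUnion.2 ⟨q, hq2, measure_mono_null (Set.Ioc_subset_Ioc_left hq1.le) hb0⟩
  have hBadNull : ν Bad = 0 := by
    refine le_antisymm (le_trans (measure_mono hBadCov) ?_) zero_le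
    calc ν (⋃ q : ℚ, {x : ℝ | (q:ℝ) < x ∧ ν (Set.Ioc (q:ℝ) x) = 0})
        ≤ ∑' q : ℚ, ν {x : ℝ | (q:ℝ) < x ∧ ν (Set.Ioc (q:ℝ) x) = 0} := measure_iUnion_le _
      _ = 0 := by simp [null_flat]
  rw [ae_iff]
  refine le_antisymm (le_trans (le_trans (measure_mono ?_) (Measure.le_map_apply hX.aemeasurable Bad)) hBadNull.le) zero_le
  intro ω hω
  simp only [Set.mem_setOf_eq, not_forall] at hω
  obtain ⟨b, hb, h0⟩ := hω
  push_neg at h0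
  exact ⟨b, hb, h0⟩

theorem recover_from_randomized_rank {Ω : Type*} {m0 : MeasurableSpace Ω}
    {μ : Measure Ω} [IsProbabilityMeasure μ]
    (X θ : Ω → ℝ) (hX : Measurable X) (hθ : Measurable θ)
    (hθunif : Measure.map θ μ = volume.restrict (Set.Icc (0 : ℝ) 1))
    (hindep : IndepFun X θ μ) :
    let Fbar : ℝ → ℝ := fun b => (μ {ω | X ω > b}).toReal
    let FbarL : ℝ → ℝ := fun b => (μ {ω | X ω ≥ b}).toReal
    let Ginv : ℝ → ℝ := fun δ => sInf {b : ℝ | Fbar b ≤ δ}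
    let R : Ω → ℝ := fun ω => Fbar (X ω) + θ ω * (FbarL (X ω) - Fbar (X ω))
    (∀ᵐ ω ∂μ, Ginv (R ω) = X ω) ∧
    (∀ᵐ ω ∂μ, FbarL (X ω) > Fbar (X ω) →
      θ ω = (R ω - Fbar (Ginv (R ω))) / (FbarL (Ginv (R ω)) - Fbar (Ginv (R ω)))) := by
  intro Fbar FbarL Ginv R
  -- a.s. θ ∈ (0,1)
  have hθae : ∀ᵐ ω ∂μ, θ ω ∈ Set.Ioo (0:ℝ) 1 := by
    rw [ae_iff]
    have : {ω | ¬ θ ω ∈ Set.Ioo (0:ℝ) 1} = θ ⁻¹' (Set.Ioo (0:ℝ) 1)ᶜ := rfl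
    rw [this, ← Measure.map_apply hθ measurableSet_Ioo.compl, hθunif,
      Measure.restrict_apply measurableSet_Ioo.compl]
    have h2 : (Set.Ioo (0:ℝ) 1)ᶜ ∩ Set.Icc 0 1 = ({0, 1} : Set ℝ) := by
      rw [Set.inter_comm, ← Set.diff_eq]
      exact Set.Icc_diff_Ioo_same zero_le_one
    rw [h2]
    exact ((Set.finite_singleton (1:ℝ)).insert 0).measure_zero _
  have hXae := ae_no_flat X hX (μ := μ)
  have main : ∀ᵐ ω ∂μ, Ginv (R ω) = X ω := by
    filter_upwards [hθae, hXae] with ω hθω hXω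
    set x := X ω with hx
    set t := θ ω with ht
    have hAtop : μ {ω' | X ω' > x} ≠ ⊤ := measure_ne_top _ _
    have hLtop : μ {ω' | X ω' ≥ x} ≠ ⊤ := measure_ne_top _ _
    have hAL : μ {ω' | X ω' > x} ≤ μ {ω' | X ω' ≥ x} :=
      measure_mono (fun ω' (h : X ω' > x) => le_of_lt h)
    have haRlR : Fbar x ≤ FbarL x := ENNReal.toReal_mono hLtop hAL
    have hRge : Fbar x ≤ R ω := by
      have h1 : 0 ≤ t * (FbarL x - Fbar x) := by
        have := hθω.1
        nlinarith
      show Fbar x ≤ Fbar x + t * (FbarL x - Fbar x)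
      linarith
    have key : ∀ b < x, R ω < Fbar b := by
      intro b hb
      have hLle : μ {ω' | X ω' ≥ x} ≤ μ {ω' | X ω' > b} :=
        measure_mono (fun ω' (h : X ω' ≥ x) => lt_of_lt_of_le hb h)
      have hFb : FbarL x ≤ Fbar b := ENNReal.toReal_mono (measure_ne_top _ _) hLle
      rcases lt_or_eq_of_le haRlR with hlt | heq
      · have : R ω < FbarL x := by
          show Fbar x + t * (FbarL x - Fbar x) < FbarL x
          nlinarith [hθω.2, hθω.1]
        linarith
      · -- no atom at x: use no-flat condition
        have hsplit : {ω' | X ω' > b} = (X ⁻¹' Set.Ioc b x) ∪ {ω' | X ω' > x} := by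
          ext ω'
          simp only [Set.mem_setOf_eq, Set.mem_union, Set.mem_preimage, Set.mem_Ioc]
          constructor
          · intro h
            rcases le_or_gt (X ω') x with h' | h'
            · exact Or.inl ⟨h, h'⟩
            · exact Or.inr h'
          · rintro (⟨h, _⟩ | h)
            · exact h
            · exact lt_trans hb h
        have hdisj : Disjoint (X ⁻¹' Set.Ioc b x) {ω' | X ω' > x} := by
          rw [Set.disjoint_left]
          rintro ω' ⟨_, h2⟩ h3
          exact absurd h3 (not_lt.2 h2)
        have hmeas : μ {ω' | X ω' > b} = μ (X ⁻¹' Set.Ioc b x) + μ {ω' | X ω' > x} := by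
          rw [hsplit, measure_union hdisj (hX measurableSet_Ioi)]
        have hne0 : μ (X ⁻¹' Set.Ioc b x) ≠ 0 := by
          have := hXω b hb
          rwa [Measure.map_apply hX measurableSet_Ioc] at this
        have hstrict : μ {ω' | X ω' > x} < μ {ω' | X ω' > b} := by
          rw [hmeas]
          calc μ {ω' | X ω' > x} < μ {ω' | X ω' > x} + μ (X ⁻¹' Set.Ioc b x) :=
                ENNReal.lt_add_right hAtop hne0
            _ = μ (X ⁻¹' Set.Ioc b x) + μ {ω' | X ω' > x} := add_comm _ _
        have htr : Fbar x < Fbar b :=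
          (ENNReal.toReal_lt_toReal hAtop (measure_ne_top _ _)).2 hstrict
        have hReq : R ω = Fbar x := by
          show Fbar x + t * (FbarL x - Fbar x) = Fbar x
          rw [← heq]; ring
        linarith
    have hmem : Fbar x ≤ R ω := hRge
    have hlb : ∀ c ∈ {b : ℝ | Fbar b ≤ R ω}, x ≤ c := by
      intro c hc
      by_contra hcx
      push_neg at hcx
      exact absurd hc (not_le.2 (key c hcx))
    exact le_antisymm (csInf_le ⟨x, hlb⟩ hmem) (le_csInf ⟨x, hmem⟩ hlb)
  refine ⟨main, ?_⟩
  filter_upwards [main] with ω hG hlt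
  rw [hG]
  have hd : FbarL (X ω) - Fbar (X ω) ≠ 0 := ne_of_gt (sub_pos.2 hlt)
  rw [eq_div_iff hd]
  show θ ω * (FbarL (X ω) - Fbar (X ω)) =
    Fbar (X ω) + θ ω * (FbarL (X ω) - Fbar (X ω)) - Fbar (X ω)
  ring
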